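/- Let B ⊆ P(n,r) be a Borel set, with x^α ∈ 𝔪(B_j) a minimal element of B_j = B ∩ P(n−j,r) having min x^α = j, and x^β ∈ 𝔐(N_j) a maximal element of N_j = N ∩ P(n−j,r) with min x^β = j, where N = P(n,r) \ B. Let 𝔉_α be the family of admissible compositions of decreasing moves F = (e⁻_{l_s})^{λ_s} ⋯ (e⁻_{l_1})^{λ_1} with j ≥ l_1 > ⋯ > l_s such that F(x^α) ∈ B, together with the identity. Assume: (i) for every admissible e⁻_k with k > j, e⁻_k(x^α) ≠ x^β; (ii) every F ∈ 𝔉_α is admissible on x^β and e⁺_i(F(x^β)) ∈ B for every admissible increasing move e⁺_i with i ≥ j. Then B̃ = (B ∪ 𝔉_α(x^β)) \ 𝔉_α(x^α) is a Borel set, and |B̃ ∩ P(n−i,r)| = |B ∩ P(n−i,r)| for every i. -/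

import Mathlib

open Finset

/-- Elementary decreasing move `e⁻_i` : replace one factor `x_i` by `x_{i-1}`. -/
def downAt (i : ℕ) (α : ℕ → ℕ) : ℕ → ℕ :=
  fun k => if k = i then α i - 1 else if k = i - 1 then α (i - 1) + 1 else α k

/-- Elementary increasing move `e⁺_i` : replace one factor `x_i` by `x_{i+1}`. -/
def upAt (i : ℕ) (α : ℕ → ℕ) : ℕ → ℕ :=
  fun k => if k = i then α i - 1 else if k = i + 1 then α (i + 1) + 1 else α k

/-- `β` is obtained from `α` by one admissible decreasing move. -/
def DownStep (n : ℕ) (α β : ℕ → ℕ) : Prop :=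
  ∃ i, 1 ≤ i ∧ i ≤ n ∧ 0 < α i ∧ β = downAt i α

/-- `β` is obtained from `α` by one admissible increasing move. -/
def UpStep (n : ℕ) (α β : ℕ → ℕ) : Prop :=
  ∃ i, i < n ∧ 0 < α i ∧ β = upAt i α

/-- Borel partial order: `geB n α β` means `x^α ≥_B x^β`, i.e. `β` is reachable
from `α` by a finite sequence of decreasing moves. -/
def geB (n : ℕ) (α β : ℕ → ℕ) : Prop :=
  Relation.ReflTransGen (DownStep n) α β

/-- `Mon n r` : (exponents of) monomials of degree `r` in `x_0,…,x_n`, i.e. `𝒫(n,r)`. -/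
def Mon (n r : ℕ) : Set (ℕ → ℕ) :=
  {α | (∀ k, n < k → α k = 0) ∧ ∑ i ∈ Finset.range (n + 1), α i = r}

/-- A Borel set in `𝒫(n,r)`: closed under admissible increasing moves. -/
def IsBorelSet (n r : ℕ) (B : Set (ℕ → ℕ)) : Prop :=
  B ⊆ Mon n r ∧ ∀ α ∈ B, ∀ β, UpStep n α β → β ∈ B

/-- `σ(j) = ∑_{i=j}^n α_i`. -/
def sumFrom (n j : ℕ) (α : ℕ → ℕ) : ℕ := ∑ i ∈ Finset.Icc j n, α i

/-- Multiplication by the variable `x_i`. -/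
def addVar (i : ℕ) (α : ℕ → ℕ) : ℕ → ℕ := fun k => if k = i then α k + 1 else α k

/-- Division by the variable `x_i`. -/
def subVar (i : ℕ) (α : ℕ → ℕ) : ℕ → ℕ := fun k => if k = i then α k - 1 else α k

/-- The result of applying the composition of decreasing moves `(e⁻_l)^{μ l}` (over all `l`). -/
def applyMoves (μ α : ℕ → ℕ) : ℕ → ℕ := fun k => α k + μ (k + 1) - μ k

/-- The composition of decreasing moves encoded by `μ` is admissible on `α`. -/
def AdmissibleOn (μ α : ℕ → ℕ) : Prop := ∀ k, μ k ≤ α k + μ (k + 1)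

/-- `𝔉_α` : admissible compositions of decreasing moves with indices in `[1,j]`
sending `α` inside `B` (contains the identity `μ = 0` as soon as `α ∈ B`). -/
def MovesFam (j : ℕ) (α : ℕ → ℕ) (B : Set (ℕ → ℕ)) : Set (ℕ → ℕ) :=
  {μ | (∀ l, μ l ≠ 0 → 1 ≤ l ∧ l ≤ j) ∧ AdmissibleOn μ α ∧ applyMoves μ α ∈ B}

/-- `min x^γ` : least index of a variable dividing `x^γ`. -/
noncomputable def minIdx (γ : ℕ → ℕ) : ℕ := sInf {k | γ k ≠ 0}

/-- `x^α >_DegLex x^β` for monomials of the same degree (`x_n ≻ ⋯ ≻ x_0`). -/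
def degLexGT (α β : ℕ → ℕ) : Prop :=
  ∃ j, β j < α j ∧ ∀ k, j < k → α k = β k

/-- `x^α >_RevLex x^β` for monomials of the same degree (`x_n ≻ ⋯ ≻ x_0`). -/
def revLexGT (α β : ℕ → ℕ) : Prop :=
  ∃ j, α j < β j ∧ ∀ k, k < j → α k = β k

/-- The monomial `x_1^k x_0^{d-k}`. -/
def pure01 (d k : ℕ) : ℕ → ℕ :=
  fun m => if m = 1 then k else if m = 0 then d - k else 0

/-- For a Borel set `B` of degree-`d` monomials (points case), the regularity of the
saturation of `⟨B⟩` is the least `s` with `x_1^s x_0^{d-s} ∈ B`. -/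
noncomputable def regSat (d : ℕ) (B : Set (ℕ → ℕ)) : ℕ := sInf {s | pure01 d s ∈ B}

/-- Degree-`d` part of the lexsegment ideal `L = (x_n,…,x_2,x_1^d)`. -/
def lexSegPts (n d : ℕ) : Set (ℕ → ℕ) :=
  {α ∈ Mon n d | (∃ i, 2 ≤ i ∧ i ≤ n ∧ 0 < α i) ∨ d ≤ α 1}

/-- A monomial ideal in `K[x_0,…,x_n]`, given by its set of (exponents of) monomials. -/
def IsMonomialIdeal (n : ℕ) (S : Set (ℕ → ℕ)) : Prop :=
  (∀ α ∈ S, ∀ k, n < k → α k = 0) ∧ ∀ α ∈ S, ∀ k, k ≤ n → addVar k α ∈ S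

/-- Strongly stable (Borel-fixed in characteristic 0): `x^α ∈ I`, `x_i ∣ x^α`, `i < j ≤ n`
implies `x_j x^α / x_i ∈ I`. -/
def StronglyStable (n : ℕ) (S : Set (ℕ → ℕ)) : Prop :=
  ∀ α ∈ S, ∀ i j, i < j → j ≤ n → 0 < α i →
    (fun k => if k = i then α i - 1 else if k = j then α j + 1 else α k) ∈ S

/-- `x^α` is a minimal generator of the monomial ideal `S`. -/
def MinGen (n : ℕ) (S : Set (ℕ → ℕ)) (α : ℕ → ℕ) : Prop :=
  α ∈ S ∧ ∀ k, k ≤ n → 0 < α k → subVar k α ∉ S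
section Stmt8Aux

private lemma applyMoves_apply (μ γ : ℕ → ℕ) (k : ℕ) :
    applyMoves μ γ k = γ k + μ (k + 1) - μ k := rfl

private def bump (a v : ℕ) (μ : ℕ → ℕ) : ℕ → ℕ := fun k => if k = a then v else μ k

private lemma bump_same (a v : ℕ) (μ : ℕ → ℕ) : bump a v μ a = v := if_pos rfl

private lemma bump_ne (a v : ℕ) (μ : ℕ → ℕ) {k : ℕ} (h : k ≠ a) : bump a v μ k = μ k :=
  if_neg h

private lemma upAt_self (i : ℕ) (γ : ℕ → ℕ) : upAt i γ i = γ i - 1 := by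
  simp [upAt]

private lemma upAt_succ (i : ℕ) (γ : ℕ → ℕ) : upAt i γ (i + 1) = γ (i + 1) + 1 := by
  simp only [upAt]
  rw [if_neg (by omega : ¬ (i + 1 = i))]
  simp

private lemma upAt_other (i : ℕ) (γ : ℕ → ℕ) {k : ℕ} (h1 : k ≠ i) (h2 : k ≠ i + 1) :
    upAt i γ k = γ k := by
  simp only [upAt]
  rw [if_neg h1, if_neg h2]

private lemma downAt_succ_self (i : ℕ) (α : ℕ → ℕ) : downAt (i + 1) α (i + 1) = α (i + 1) - 1 := by
  simp [downAt]

private lemma downAt_succ_pred (i : ℕ) (α : ℕ → ℕ) : downAt (i + 1) α i = α i + 1 := by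
  simp only [downAt, Nat.add_sub_cancel]
  rw [if_neg (by omega : ¬ (i = i + 1))]
  simp

private lemma downAt_succ_other (i : ℕ) (α : ℕ → ℕ) {k : ℕ} (h1 : k ≠ i) (h2 : k ≠ i + 1) :
    downAt (i + 1) α k = α k := by
  simp only [downAt, Nat.add_sub_cancel]
  rw [if_neg h2, if_neg h1]

private lemma monFinite (n r : ℕ) : (Mon n r).Finite := by
  have hinj : Set.InjOn
      (fun γ : ℕ → ℕ => fun i : Fin (n + 1) => (⟨min (γ i.1) r, by omega⟩ : Fin (r + 1)))
      (Mon n r) := by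
    intro γ1 h1 γ2 h2 he
    have hb : ∀ γ : ℕ → ℕ, γ ∈ Mon n r → ∀ k, k ≤ n → γ k ≤ r := by
      intro γ hγ k hk
      have h := Finset.single_le_sum (f := γ) (fun i _ => Nat.zero_le _)
        (Finset.mem_range.2 (by omega : k < n + 1))
      rw [hγ.2] at h
      exact h
    funext k
    by_cases hk : k ≤ n
    · have hc := congrFun he ⟨k, by omega⟩
      simp only [Fin.mk.injEq] at hc
      have e1 := hb γ1 h1 k hk
      have e2 := hb γ2 h2 k hk
      omega
    · rw [h1.1 k (by omega), h2.1 k (by omega)]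
  exact Set.Finite.of_finite_image (Set.toFinite _) hinj

private lemma applyMoves_mem_Mon {n r j : ℕ} (hj : j ≤ n) {μ γ : ℕ → ℕ}
    (hs : ∀ l, μ l ≠ 0 → 1 ≤ l ∧ l ≤ j) (ha : AdmissibleOn μ γ) (hγ : γ ∈ Mon n r) :
    applyMoves μ γ ∈ Mon n r := by
  have h0 : μ 0 = 0 := by by_contra h; have := (hs 0 h).1; omega
  have hgt : ∀ l, j < l → μ l = 0 := by intro l hl; by_contra h; have := (hs l h).2; omega
  refine ⟨?_, ?_⟩
  · intro k hk
    rw [applyMoves_apply, hγ.1 k hk, hgt k (by omega), hgt (k + 1) (by omega)]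
  · have hpt : ∀ k ∈ Finset.range (n + 1), applyMoves μ γ k + μ k = γ k + μ (k + 1) := by
      intro k _
      have := ha k
      rw [applyMoves_apply]
      omega
    have hsum := Finset.sum_congr rfl hpt
    rw [Finset.sum_add_distrib, Finset.sum_add_distrib] at hsum
    have ht1 : ∑ k ∈ Finset.range (n + 1), μ (k + 1)
        = (∑ k ∈ Finset.range n, μ (k + 1)) + μ (n + 1) := Finset.sum_range_succ _ n
    have ht2 : ∑ k ∈ Finset.range (n + 1), μ k
        = (∑ k ∈ Finset.range n, μ (k + 1)) + μ 0 := Finset.sum_range_succ' _ n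
    have hn1 : μ (n + 1) = 0 := hgt _ (by omega)
    have hγsum := hγ.2
    omega

private lemma downAt_succ_mem_Mon {n r : ℕ} {α : ℕ → ℕ} (hmon : α ∈ Mon n r) {i : ℕ}
    (hin : i + 1 ≤ n) (hpos : 0 < α (i + 1)) : downAt (i + 1) α ∈ Mon n r := by
  have heq : downAt (i + 1) α = applyMoves (bump (i + 1) 1 (fun _ => 0)) α := by
    funext k
    by_cases h1 : k = i + 1
    · subst h1
      rw [downAt_succ_self, applyMoves_apply, bump_same,
        bump_ne _ _ _ (by omega : i + 1 + 1 ≠ i + 1)]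
      omega
    · by_cases h2 : k = i
      · rw [h2, downAt_succ_pred, applyMoves_apply, bump_same,
          bump_ne _ _ _ (by omega : i ≠ i + 1)]
        omega
      · rw [downAt_succ_other i α h2 h1, applyMoves_apply, bump_ne _ _ _ h1,
          bump_ne _ _ _ (by omega : k + 1 ≠ i + 1)]
        omega
  rw [heq]
  refine applyMoves_mem_Mon (j := i + 1) hin ?_ ?_ hmon
  · intro l hl
    by_cases h : l = i + 1
    · exact ⟨by omega, by omega⟩
    · rw [bump_ne _ _ _ h] at hl; omega
  · intro k
    by_cases h : k = i + 1
    · subst h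
      rw [bump_same]
      omega
    · rw [bump_ne _ _ _ h]
      omega

private lemma eq_at_of_sums {n r : ℕ} {f g : ℕ → ℕ} (hf : f ∈ Mon n r) (hg : g ∈ Mon n r)
    {a : ℕ} (ha : a ≤ n) (hoff : ∀ k, k ≠ a → f k = g k) : f a = g a := by
  have h1 := hf.2
  have h2 := hg.2
  have ha' : a ∈ Finset.range (n + 1) := Finset.mem_range.2 (by omega)
  rw [← Finset.add_sum_erase _ f ha'] at h1
  rw [← Finset.add_sum_erase _ g ha'] at h2
  have heq : ∑ k ∈ (Finset.range (n + 1)).erase a, f k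
      = ∑ k ∈ (Finset.range (n + 1)).erase a, g k :=
    Finset.sum_congr rfl (fun k hk => hoff k (Finset.ne_of_mem_erase hk))
  omega

private lemma mem_of_applyMoves {n r j : ℕ} {B : Set (ℕ → ℕ)} (hB : IsBorelSet n r B)
    (hj : j ≤ n) :
    ∀ N (μ δ : ℕ → ℕ), (∑ l ∈ Finset.Icc 1 j, μ l) ≤ N →
      (∀ l, μ l ≠ 0 → 1 ≤ l ∧ l ≤ j) → AdmissibleOn μ δ → applyMoves μ δ ∈ B → δ ∈ B := by
  intro N
  induction N with
  | zero =>
    intro μ δ hN hs ha hmem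
    have hz : ∀ l, μ l = 0 := by
      intro l
      by_cases h : μ l = 0
      · exact h
      · have h1 := hs l h
        have h2 : μ l ≤ ∑ l ∈ Finset.Icc 1 j, μ l :=
          Finset.single_le_sum (fun i _ => Nat.zero_le _) (Finset.mem_Icc.2 h1)
        omega
    have he : applyMoves μ δ = δ := by funext k; rw [applyMoves_apply, hz, hz]; omega
    rwa [he] at hmem
  | succ N ih =>
    intro μ δ hN hs ha hmem
    by_cases h0 : ∀ l, μ l = 0
    · have he : applyMoves μ δ = δ := by funext k; rw [applyMoves_apply, h0, h0]; omega
      rwa [he] at hmem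
    · push_neg at h0
      have hex : ∃ l, μ l ≠ 0 := h0
      have hl : μ (Nat.find hex) ≠ 0 := Nat.find_spec hex
      have hlmin : ∀ k, k < Nat.find hex → μ k = 0 := by
        intro k hk
        by_contra h
        exact Nat.find_min hex hk h
      obtain ⟨hl1, hlj⟩ := hs _ hl
      obtain ⟨m, hm⟩ : ∃ m, Nat.find hex = m + 1 := ⟨Nat.find hex - 1, by omega⟩
      rw [hm] at hl hlj
      have hμm : μ m = 0 := hlmin m (by omega)
      have heq : applyMoves (bump (m + 1) (μ (m + 1) - 1) μ) δ = upAt m (applyMoves μ δ) := by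
        funext k
        have ham := ha m
        have ham1 := ha (m + 1)
        by_cases hk1 : k = m
        · rw [hk1, applyMoves_apply, upAt_self, applyMoves_apply,
            bump_same, bump_ne _ _ _ (by omega : m ≠ m + 1)]
          omega
        · by_cases hk2 : k = m + 1
          · subst hk2
            rw [applyMoves_apply, upAt_succ, applyMoves_apply,
              bump_same, bump_ne _ _ _ (by omega : m + 1 + 1 ≠ m + 1)]
            omega
          · rw [applyMoves_apply, upAt_other m _ hk1 hk2, applyMoves_apply,
              bump_ne _ _ _ hk2, bump_ne _ _ _ (by omega : k + 1 ≠ m + 1)]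
      have hmem' : applyMoves (bump (m + 1) (μ (m + 1) - 1) μ) δ ∈ B := by
        rw [heq]
        refine hB.2 _ hmem _ ⟨m, by omega, ?_, rfl⟩
        rw [applyMoves_apply, hμm]
        omega
      refine ih (bump (m + 1) (μ (m + 1) - 1) μ) δ ?_ ?_ ?_ hmem'
      · have hmem1 : m + 1 ∈ Finset.Icc 1 j := Finset.mem_Icc.2 ⟨by omega, hlj⟩
        have e1 := Finset.add_sum_erase _ μ hmem1
        have e2 := Finset.add_sum_erase _ (bump (m + 1) (μ (m + 1) - 1) μ) hmem1
        have e3 : ∑ x ∈ (Finset.Icc 1 j).erase (m + 1), bump (m + 1) (μ (m + 1) - 1) μ x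
            = ∑ x ∈ (Finset.Icc 1 j).erase (m + 1), μ x :=
          Finset.sum_congr rfl (fun k hk => bump_ne _ _ _ (Finset.ne_of_mem_erase hk))
        rw [bump_same] at e2
        omega
      · intro l hl
        by_cases h : l = m + 1
        · exact ⟨by omega, by omega⟩
        · rw [bump_ne _ _ _ h] at hl
          exact hs l hl
      · intro k
        have hak := ha k
        by_cases hk1 : k = m
        · rw [hk1, bump_ne _ _ _ (by omega : m ≠ m + 1), bump_same, hμm]
          omega
        · by_cases hk2 : k = m + 1
          · subst hk2
            rw [bump_same, bump_ne _ _ _ (by omega : m + 1 + 1 ≠ m + 1)]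
            omega
          · rw [bump_ne _ _ _ hk2, bump_ne _ _ _ (by omega : k + 1 ≠ m + 1)]
            exact hak

private lemma applyMoves_injOn {j : ℕ} {γ0 μ ν : ℕ → ℕ}
    (hμs : ∀ l, μ l ≠ 0 → 1 ≤ l ∧ l ≤ j) (hνs : ∀ l, ν l ≠ 0 → 1 ≤ l ∧ l ≤ j)
    (hμa : AdmissibleOn μ γ0) (hνa : AdmissibleOn ν γ0)
    (h : applyMoves μ γ0 = applyMoves ν γ0) : μ = ν := by
  have hμ0 : ∀ l, j < l → μ l = 0 := by
    intro l hl; by_contra hc; have := (hμs l hc).2; omega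
  have hν0 : ∀ l, j < l → ν l = 0 := by
    intro l hl; by_contra hc; have := (hνs l hc).2; omega
  have key : ∀ m k, j + 1 ≤ k + m → μ k = ν k := by
    intro m
    induction m with
    | zero =>
      intro k hk
      rw [hμ0 k (by omega), hν0 k (by omega)]
    | succ m ih =>
      intro k hk
      by_cases h' : j + 1 ≤ k + m
      · exact ih k h'
      · have hk1 : μ (k + 1) = ν (k + 1) := ih (k + 1) (by omega)
        have e := congrFun h k
        rw [applyMoves_apply, applyMoves_apply] at e
        have a1 := hμa k
        have a2 := hνa k
        omega
  funext k
  exact key (j + 1) k (by omega)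

private lemma applyMoves_sec {j m : ℕ} {γ0 μ : ℕ → ℕ} (hγ0 : ∀ k, k < j → γ0 k = 0)
    (hγ0j : γ0 j ≠ 0) (hs : ∀ l, μ l ≠ 0 → 1 ≤ l ∧ l ≤ j) (ha : AdmissibleOn μ γ0) :
    (∀ k, k < m → applyMoves μ γ0 k = 0) ↔ (m ≤ j ∧ μ m = 0) := by
  have h0 : μ 0 = 0 := by by_contra hc; have := (hs 0 hc).1; omega
  have hgt : ∀ l, j < l → μ l = 0 := by
    intro l hl; by_contra hc; have := (hs l hc).2; omega
  constructor
  · intro h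
    have hz : ∀ k, k ≤ j → k ≤ m → μ k = 0 := by
      intro k
      induction k with
      | zero => intro _ _; exact h0
      | succ k ih =>
        intro hkj hkm
        have hk0 : μ k = 0 := ih (by omega) (by omega)
        have hv := h k (by omega)
        rw [applyMoves_apply, hγ0 k (by omega)] at hv
        omega
    have hmj : m ≤ j := by
      by_contra hc
      have hv := h j (by omega)
      rw [applyMoves_apply, hz j le_rfl (by omega), hgt (j + 1) (by omega)] at hv
      exact hγ0j (by omega)
    exact ⟨hmj, hz m hmj le_rfl⟩
  · rintro ⟨hmj, hm0⟩
    have hzz : ∀ d k, k + d = m → μ k = 0 := by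
      intro d
      induction d with
      | zero =>
        intro k hk
        rw [show k = m by omega]
        exact hm0
      | succ d ih =>
        intro k hk
        have a1 := ha k
        rw [hγ0 k (by omega)] at a1
        have a2 := ih (k + 1) (by omega)
        omega
    intro k hk
    rw [applyMoves_apply, hγ0 k (by omega), hzz (m - (k + 1)) (k + 1) (by omega),
      hzz (m - k) k (by omega)]

end Stmt8Aux

/-- swapping the orbit of a minimal element under the Borel-consistent family
of decreasing moves with the orbit of a maximal element of the complement preserves the
Borel condition and all the cardinalities of the sections. -/
theorem stmt_8 (n r j : ℕ) (B : Set (ℕ → ℕ)) (hB : IsBorelSet n r B)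
    (α β : ℕ → ℕ)
    (hαB : α ∈ B) (hα0 : ∀ k, k < j → α k = 0) (hαj : α j ≠ 0)
    (hαmin : ∀ i, j < i → i ≤ n → 0 < α i → downAt i α ∉ B)
    (hβmon : β ∈ Mon n r) (hβB : β ∉ B) (hβ0 : ∀ k, k < j → β k = 0) (hβj : β j ≠ 0)
    (hβmax : ∀ i, j ≤ i → i < n → 0 < β i → upAt i β ∈ B)
    (h1 : ∀ i, j < i → i ≤ n → 0 < α i → downAt i α ≠ β)
    (h2 : ∀ μ ∈ MovesFam j α B, AdmissibleOn μ β ∧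
          ∀ i, j ≤ i → i < n → 0 < applyMoves μ β i → upAt i (applyMoves μ β) ∈ B) :
    IsBorelSet n r
      ((B ∪ (fun μ => applyMoves μ β) '' MovesFam j α B) \
        ((fun μ => applyMoves μ α) '' MovesFam j α B)) ∧
    ∀ i, (((B ∪ (fun μ => applyMoves μ β) '' MovesFam j α B) \
        ((fun μ => applyMoves μ α) '' MovesFam j α B)) ∩
          {γ | ∀ k, k < i → γ k = 0}).ncard
        = (B ∩ {γ | ∀ k, k < i → γ k = 0}).ncard := by
  classical
  set F := MovesFam j α B with hFdef
  have hFmem : ∀ μ : ℕ → ℕ, μ ∈ F ↔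
      ((∀ l, μ l ≠ 0 → 1 ≤ l ∧ l ≤ j) ∧ AdmissibleOn μ α ∧ applyMoves μ α ∈ B) :=
    fun μ => Iff.rfl
  have hαmon : α ∈ Mon n r := hB.1 hαB
  have hj : j ≤ n := by
    by_contra h
    exact hαj (hαmon.1 j (by omega))
  have hgt : ∀ μ ∈ F, ∀ l, j < l → μ l = 0 := by
    intro μ hμ l hl
    by_contra h
    have := ((hFmem μ).1 hμ).1 l h
    omega
  have hAβ_notB : ∀ μ ∈ F, applyMoves μ β ∉ B := by
    intro μ hμ hmem
    exact hβB (mem_of_applyMoves hB hj (∑ l ∈ Finset.Icc 1 j, μ l) μ β le_rfl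
      ((hFmem μ).1 hμ).1 (h2 μ hμ).1 hmem)
  -- K1 : closure of the complement of 𝔉_α(x^α) among B under division
  have K1 : ∀ γ ∈ B, ∀ i, i < n → 0 < γ i →
      upAt i γ ∈ (fun μ => applyMoves μ α) '' F → γ ∈ (fun μ => applyMoves μ α) '' F := by
    rintro γ hγB i hin hγi ⟨ν, hνF, hδ⟩
    obtain ⟨hνs, hνa, hνB⟩ := (hFmem ν).1 hνF
    have hδ' : ∀ k, applyMoves ν α k = upAt i γ k := fun k => congrFun hδ k
    have hδi : applyMoves ν α i = γ i - 1 := by rw [hδ' i, upAt_self]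
    have hδi1 : applyMoves ν α (i + 1) = γ (i + 1) + 1 := by rw [hδ' (i + 1), upAt_succ]
    have hδo : ∀ k, k ≠ i → k ≠ i + 1 → applyMoves ν α k = γ k := by
      intro k u1 u2
      rw [hδ' k, upAt_other i γ u1 u2]
    by_cases hij : i + 1 ≤ j
    · -- add one more decreasing move at i+1
      have key : ν (i + 1) + 1 ≤ α (i + 1) + ν (i + 1 + 1) := by
        have a1 := hνa (i + 1)
        have a2 := hδi1
        rw [applyMoves_apply] at a2
        omega
      have hmemF : bump (i + 1) (ν (i + 1) + 1) ν ∈ F := by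
        refine (hFmem _).2 ⟨?_, ?_, ?_⟩
        · intro l hl
          by_cases h : l = i + 1
          · exact ⟨by omega, by omega⟩
          · rw [bump_ne _ _ _ h] at hl
            exact hνs l hl
        · intro k
          by_cases hk1 : k = i
          · rw [hk1, bump_ne _ _ _ (by omega : i ≠ i + 1), bump_same]
            have := hνa i
            omega
          · by_cases hk2 : k = i + 1
            · rw [hk2, bump_same, bump_ne _ _ _ (by omega : i + 1 + 1 ≠ i + 1)]
              omega
            · rw [bump_ne _ _ _ hk2, bump_ne _ _ _ (by omega : k + 1 ≠ i + 1)]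
              exact hνa k
        · have heqγ : applyMoves (bump (i + 1) (ν (i + 1) + 1) ν) α = γ := by
            funext k
            by_cases hk1 : k = i
            · have a1 := hνa i
              have a2 := hδi
              rw [applyMoves_apply] at a2
              rw [hk1, applyMoves_apply, bump_ne _ _ _ (by omega : i ≠ i + 1), bump_same]
              omega
            · by_cases hk2 : k = i + 1
              · have a2 := hδi1
                rw [applyMoves_apply] at a2
                rw [hk2, applyMoves_apply, bump_same,
                  bump_ne _ _ _ (by omega : i + 1 + 1 ≠ i + 1)]
                omega
              · have a2 := hδo k hk1 hk2
                rw [applyMoves_apply] at a2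
                rw [applyMoves_apply, bump_ne _ _ _ hk2,
                  bump_ne _ _ _ (by omega : k + 1 ≠ i + 1)]
                exact a2
          rw [heqγ]
          exact hγB
      refine ⟨bump (i + 1) (ν (i + 1) + 1) ν, hmemF, ?_⟩
      -- the image equality
      beta_reduce
      funext k
      by_cases hk1 : k = i
      · have a1 := hνa i
        have a2 := hδi
        rw [applyMoves_apply] at a2
        rw [hk1, applyMoves_apply, bump_ne _ _ _ (by omega : i ≠ i + 1), bump_same]
        omega
      · by_cases hk2 : k = i + 1
        · have a2 := hδi1
          rw [applyMoves_apply] at a2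
          rw [hk2, applyMoves_apply, bump_same, bump_ne _ _ _ (by omega : i + 1 + 1 ≠ i + 1)]
          omega
        · have a2 := hδo k hk1 hk2
          rw [applyMoves_apply] at a2
          rw [applyMoves_apply, bump_ne _ _ _ hk2, bump_ne _ _ _ (by omega : k + 1 ≠ i + 1)]
          exact a2
    · -- i ≥ j : contradiction with minimality of α
      exfalso
      have hν0 : ∀ l, j < l → ν l = 0 := hgt ν hνF
      have hαpos : 0 < α (i + 1) := by
        have a2 := hδi1
        rw [applyMoves_apply, hν0 (i + 1) (by omega), hν0 (i + 1 + 1) (by omega)] at a2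
        omega
      refine hαmin (i + 1) (by omega) (by omega) hαpos ?_
      refine mem_of_applyMoves hB hj (∑ l ∈ Finset.Icc 1 j, ν l) ν _ le_rfl hνs ?_ ?_
      · -- admissible on downAt (i+1) α
        intro k
        by_cases hk1 : k = i
        · rw [hk1, downAt_succ_pred]
          have := hνa i
          omega
        · by_cases hk2 : k = i + 1
          · rw [hk2, hν0 (i + 1) (by omega)]
            omega
          · rw [downAt_succ_other i α hk1 hk2]
            exact hνa k
      · -- applyMoves ν (downAt (i+1) α) = γ ∈ B
        have heqγ : applyMoves ν (downAt (i + 1) α) = γ := by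
          funext k
          by_cases hk1 : k = i
          · have a1 := hνa i
            have a2 := hδi
            rw [applyMoves_apply] at a2
            rw [hk1, applyMoves_apply, downAt_succ_pred]
            omega
          · by_cases hk2 : k = i + 1
            · have a2 := hδi1
              rw [applyMoves_apply, hν0 (i + 1) (by omega), hν0 (i + 1 + 1) (by omega)] at a2
              rw [hk2, applyMoves_apply, downAt_succ_self,
                hν0 (i + 1) (by omega), hν0 (i + 1 + 1) (by omega)]
              omega
            · have a2 := hδo k hk1 hk2
              rw [applyMoves_apply] at a2
              rw [applyMoves_apply, downAt_succ_other i α hk1 hk2]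
              exact a2
        rw [heqγ]
        exact hγB
  -- K2 : up-moves of elements of 𝔉_α(x^β) with index ≥ j never land in 𝔉_α(x^α)
  have K2 : ∀ μ ∈ F, ∀ i, j ≤ i → i < n → 0 < applyMoves μ β i →
      upAt i (applyMoves μ β) ∉ (fun μ => applyMoves μ α) '' F := by
    rintro μ hμF i hji hin hpos ⟨ν, hνF, hδ⟩
    obtain ⟨hνs, hνa, hνB⟩ := (hFmem ν).1 hνF
    have hν0 : ∀ l, j < l → ν l = 0 := hgt ν hνF
    have hμ0 : ∀ l, j < l → μ l = 0 := hgt μ hμF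
    have hδ' : ∀ k, applyMoves ν α k = upAt i (applyMoves μ β) k := fun k => congrFun hδ k
    have htδ : ∀ k, j < k → applyMoves ν α k = α k := by
      intro k hk
      rw [applyMoves_apply, hν0 k hk, hν0 (k + 1) (by omega)]
      omega
    have htγ : ∀ k, j < k → applyMoves μ β k = β k := by
      intro k hk
      rw [applyMoves_apply, hμ0 k hk, hμ0 (k + 1) (by omega)]
      omega
    have hαs : α (i + 1) = applyMoves μ β (i + 1) + 1 := by
      have a2 := hδ' (i + 1)
      rw [htδ (i + 1) (by omega), upAt_succ] at a2
      exact a2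
    have hαpos : 0 < α (i + 1) := by omega
    have hdmon : downAt (i + 1) α ∈ Mon n r := downAt_succ_mem_Mon hαmon (by omega) hαpos
    have hoff : ∀ k, k ≠ j → β k = downAt (i + 1) α k := by
      intro k hkj
      by_cases hk1 : k = i + 1
      · rw [hk1, downAt_succ_self, ← htγ (i + 1) (by omega)]
        omega
      · by_cases hk2 : k = i
        · -- here i ≠ j since k ≠ j, so j < i
          have hji' : j < i := by omega
          have a2 := hδ' i
          rw [htδ i hji', upAt_self] at a2
          rw [hk2, downAt_succ_pred, ← htγ i hji']
          omega
        · by_cases hk3 : k < j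
          · rw [hβ0 k hk3, downAt_succ_other i α hk2 hk1, hα0 k hk3]
          · -- k > j, k ∉ {i, i+1}
            have hk4 : j < k := by omega
            have a2 := hδ' k
            rw [htδ k hk4, upAt_other i _ hk2 hk1, htγ k hk4] at a2
            rw [downAt_succ_other i α hk2 hk1, ← a2]
    have hjj : β j = downAt (i + 1) α j := eq_at_of_sums hβmon hdmon hj hoff
    have hfinal : downAt (i + 1) α = β := by
      funext k
      by_cases hk : k = j
      · rw [hk, hjj]
      · rw [(hoff k hk)]
    exact h1 (i + 1) (by omega) (by omega) hαpos hfinal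
  -- K3 : 𝔉_α(x^β) is closed under up-moves with index < j
  have K3 : ∀ μ ∈ F, ∀ i, i < j → 0 < applyMoves μ β i →
      upAt i (applyMoves μ β) ∈ (fun μ => applyMoves μ β) '' F := by
    intro μ hμF i hij hpos
    obtain ⟨hμs, hμa, hμB⟩ := (hFmem μ).1 hμF
    have hadmβ := (h2 μ hμF).1
    have hβi : β i = 0 := hβ0 i hij
    have hkey : μ i + 1 ≤ μ (i + 1) := by
      have a1 := hadmβ i
      have a2 := hpos
      rw [applyMoves_apply, hβi] at a2
      rw [hβi] at a1
      omega
    have hmemF : bump (i + 1) (μ (i + 1) - 1) μ ∈ F := by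
      refine (hFmem _).2 ⟨?_, ?_, ?_⟩
      · intro l hl
        by_cases h : l = i + 1
        · exact ⟨by omega, by omega⟩
        · rw [bump_ne _ _ _ h] at hl
          exact hμs l hl
      · intro k
        by_cases hk1 : k = i
        · rw [hk1, bump_ne _ _ _ (by omega : i ≠ i + 1), bump_same]
          omega
        · by_cases hk2 : k = i + 1
          · rw [hk2, bump_same, bump_ne _ _ _ (by omega : i + 1 + 1 ≠ i + 1)]
            have := hμa (i + 1)
            omega
          · rw [bump_ne _ _ _ hk2, bump_ne _ _ _ (by omega : k + 1 ≠ i + 1)]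
            exact hμa k
      · have heqα : applyMoves (bump (i + 1) (μ (i + 1) - 1) μ) α
            = upAt i (applyMoves μ α) := by
          funext k
          by_cases hk1 : k = i
          · have a1 := hμa i
            rw [hk1, applyMoves_apply, upAt_self, applyMoves_apply,
              bump_ne _ _ _ (by omega : i ≠ i + 1), bump_same]
            omega
          · by_cases hk2 : k = i + 1
            · have a1 := hμa (i + 1)
              rw [hk2, applyMoves_apply, upAt_succ, applyMoves_apply, bump_same,
                bump_ne _ _ _ (by omega : i + 1 + 1 ≠ i + 1)]
              omega
            · rw [applyMoves_apply, upAt_other i _ hk1 hk2, applyMoves_apply,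
                bump_ne _ _ _ hk2, bump_ne _ _ _ (by omega : k + 1 ≠ i + 1)]
        rw [heqα]
        refine hB.2 _ hμB _ ⟨i, by omega, ?_, rfl⟩
        rw [applyMoves_apply]
        omega
    refine ⟨bump (i + 1) (μ (i + 1) - 1) μ, hmemF, ?_⟩
    beta_reduce
    funext k
    by_cases hk1 : k = i
    · have a1 := hadmβ i
      rw [hβi] at a1
      rw [hk1, applyMoves_apply, upAt_self, applyMoves_apply, hβi,
        bump_ne _ _ _ (by omega : i ≠ i + 1), bump_same]
      omega
    · by_cases hk2 : k = i + 1
      · have a1 := hadmβ (i + 1)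
        rw [hk2, applyMoves_apply, upAt_succ, applyMoves_apply, bump_same,
          bump_ne _ _ _ (by omega : i + 1 + 1 ≠ i + 1)]
        omega
      · rw [applyMoves_apply, upAt_other i _ hk1 hk2, applyMoves_apply,
          bump_ne _ _ _ hk2, bump_ne _ _ _ (by omega : k + 1 ≠ i + 1)]
  constructor
  · -- the Borel property
    constructor
    · rintro x ⟨hx1, -⟩
      rcases hx1 with hxB | ⟨μ, hμF, rfl⟩
      · exact hB.1 hxB
      · exact applyMoves_mem_Mon hj ((hFmem μ).1 hμF).1 (h2 μ hμF).1 hβmon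
    · rintro γ ⟨hγ1, hγ2⟩ δ ⟨i, hin, hγi, rfl⟩
      rcases hγ1 with hγB | ⟨μ, hμF, rfl⟩
      · exact ⟨Or.inl (hB.2 γ hγB _ ⟨i, hin, hγi, rfl⟩),
          fun hmem => hγ2 (K1 γ hγB i hin hγi hmem)⟩
      · by_cases hij : i < j
        · refine ⟨Or.inr (K3 μ hμF i hij hγi), ?_⟩
          rintro ⟨ν, hνF, hxα⟩
          obtain ⟨μ', hμ'F, hxβ⟩ := K3 μ hμF i hij hγi
          have hxβ' : applyMoves μ' β = upAt i (applyMoves μ β) := hxβ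
          have hxα' : applyMoves ν α = upAt i (applyMoves μ β) := hxα
          refine hAβ_notB μ' hμ'F ?_
          rw [hxβ', ← hxα']
          exact ((hFmem ν).1 hνF).2.2
        · push_neg at hij
          exact ⟨Or.inl ((h2 μ hμF).2 i hij hin hγi), K2 μ hμF i hij hin hγi⟩
  · -- the cardinalities of the sections
    intro m
    set S : Set (ℕ → ℕ) := {γ | ∀ k, k < m → γ k = 0} with hSdef
    have hmonfin := monFinite n r
    have hBfin : B.Finite := hmonfin.subset hB.1
    have hsecα : (fun μ => applyMoves μ α) '' F ∩ S
        = (fun μ => applyMoves μ α) '' {μ ∈ F | m ≤ j ∧ μ m = 0} := by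
      ext x
      constructor
      · rintro ⟨⟨μ, hμ, rfl⟩, hxS⟩
        exact ⟨μ, ⟨hμ, (applyMoves_sec hα0 hαj ((hFmem μ).1 hμ).1 ((hFmem μ).1 hμ).2.1).1 hxS⟩,
          rfl⟩
      · rintro ⟨μ, ⟨hμ, hcond⟩, rfl⟩
        exact ⟨⟨μ, hμ, rfl⟩,
          (applyMoves_sec hα0 hαj ((hFmem μ).1 hμ).1 ((hFmem μ).1 hμ).2.1).2 hcond⟩
    have hsecβ : (fun μ => applyMoves μ β) '' F ∩ S
        = (fun μ => applyMoves μ β) '' {μ ∈ F | m ≤ j ∧ μ m = 0} := by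
      ext x
      constructor
      · rintro ⟨⟨μ, hμ, rfl⟩, hxS⟩
        exact ⟨μ, ⟨hμ, (applyMoves_sec hβ0 hβj ((hFmem μ).1 hμ).1 (h2 μ hμ).1).1 hxS⟩, rfl⟩
      · rintro ⟨μ, ⟨hμ, hcond⟩, rfl⟩
        exact ⟨⟨μ, hμ, rfl⟩,
          (applyMoves_sec hβ0 hβj ((hFmem μ).1 hμ).1 (h2 μ hμ).1).2 hcond⟩
    have hinjα : Set.InjOn (fun μ => applyMoves μ α) {μ ∈ F | m ≤ j ∧ μ m = 0} := by
      intro μ hμ ν hν h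
      exact applyMoves_injOn ((hFmem μ).1 hμ.1).1 ((hFmem ν).1 hν.1).1
        ((hFmem μ).1 hμ.1).2.1 ((hFmem ν).1 hν.1).2.1 h
    have hinjβ : Set.InjOn (fun μ => applyMoves μ β) {μ ∈ F | m ≤ j ∧ μ m = 0} := by
      intro μ hμ ν hν h
      exact applyMoves_injOn ((hFmem μ).1 hμ.1).1 ((hFmem ν).1 hν.1).1
        (h2 μ hμ.1).1 (h2 ν hν.1).1 h
    have hcardαβ : ((fun μ => applyMoves μ α) '' F ∩ S).ncard
        = ((fun μ => applyMoves μ β) '' F ∩ S).ncard := by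
      rw [hsecα, hsecβ, Set.ncard_image_of_injOn hinjα, Set.ncard_image_of_injOn hinjβ]
    have hsplit : ((B ∪ (fun μ => applyMoves μ β) '' F) \ ((fun μ => applyMoves μ α) '' F)) ∩ S
        = ((B ∩ S) \ ((fun μ => applyMoves μ α) '' F ∩ S))
          ∪ ((fun μ => applyMoves μ β) '' F ∩ S) := by
      ext x
      have h3 : x ∈ (fun μ => applyMoves μ α) '' F → x ∈ B := by
        rintro ⟨ν, hν, rfl⟩
        exact ((hFmem ν).1 hν).2.2
      have h4 : x ∈ (fun μ => applyMoves μ β) '' F → x ∉ B := by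
        rintro ⟨μ, hμ, rfl⟩
        exact hAβ_notB μ hμ
      simp only [Set.mem_inter_iff, Set.mem_union, Set.mem_diff]
      tauto
    have hAβmon : (fun μ => applyMoves μ β) '' F ⊆ Mon n r := by
      rintro x ⟨μ, hμF, rfl⟩
      exact applyMoves_mem_Mon hj ((hFmem μ).1 hμF).1 (h2 μ hμF).1 hβmon
    have hfinBS : (B ∩ S).Finite := hBfin.inter_of_left S
    have hfinAβS : ((fun μ => applyMoves μ β) '' F ∩ S).Finite :=
      (hmonfin.subset hAβmon).inter_of_left S
    have hdisj : Disjoint ((B ∩ S) \ ((fun μ => applyMoves μ α) '' F ∩ S))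
        ((fun μ => applyMoves μ β) '' F ∩ S) := by
      rw [Set.disjoint_left]
      rintro x ⟨⟨hxB, -⟩, -⟩ ⟨⟨μ, hμ, rfl⟩, -⟩
      exact hAβ_notB μ hμ hxB
    have hsub : (fun μ => applyMoves μ α) '' F ∩ S ⊆ B ∩ S := by
      rintro x ⟨⟨ν, hν, rfl⟩, hxS⟩
      exact ⟨((hFmem ν).1 hν).2.2, hxS⟩
    have hdiff : ((B ∩ S) \ ((fun μ => applyMoves μ α) '' F ∩ S)).ncard
        = (B ∩ S).ncard - ((fun μ => applyMoves μ α) '' F ∩ S).ncard :=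
      Set.ncard_diff hsub (hfinBS.subset hsub)
    have hle : ((fun μ => applyMoves μ α) '' F ∩ S).ncard ≤ (B ∩ S).ncard :=
      Set.ncard_le_ncard hsub hfinBS
    rw [hsplit, Set.ncard_union_eq hdisj hfinBS.diff hfinAβS, hdiff]
    omega
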